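/- Let N ≥ 2 be an integer, q ∈ ℂ nonzero and not a root of unity (so in particular Q = q − q⁻¹ ≠ 0), and α, β ∈ ℂ with α ≠ 0 and α + 𝔰β ≠ 0. Then there exists a unique tuple (λ₁,…,λ₆) ∈ ℂ⁶ satisfying the five conditions: (T) Qλ₃ = Qλ₄ = Q + qλ₅ − (Q² + 1)λ₆; (M1) λ₄ + Qλ₆ = 0; (M2) λ₅ + q⁻¹λ₆ = 0; (M3) αλ₂ + (α + 𝔰β)λ₃ = 0; (M4) (α + 𝔰β)λ₁ + βλ₂ + βλ₄ + q^{2N} Q (β + qQα) λ₆ = 0. The unique solution is λ₁ = −q^{2N+1}Q³/2 − Q²β/(2α), λ₂ = Q²(α + 𝔰β)/(2α), λ₃ = λ₄ = −Q²/2, λ₅ = −Q/(2q), λ₆ = Q/2. -/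

import Mathlib

open scoped BigOperators

namespace Stmt6

/-- `𝔰 = Σ_{i=1}^{N} q^{−2i}`. -/
noncomputable def sconst (N : ℕ) (q : ℂ) : ℂ := ∑ i : Fin N, q ^ (-(2 * ((i.1 : ℤ) + 1)))

lemma sconst_mul (N : ℕ) (q : ℂ) (hq0 : q ≠ 0) :
    (q - q⁻¹) * sconst N q = q⁻¹ - q⁻¹ * (q⁻¹) ^ (2 * N) := by
  induction N with
  | zero => simp [sconst]
  | succ n ih =>
    have hcast : q ^ (-(2 * ((n : ℤ) + 1))) = (q⁻¹) ^ (2 * (n + 1)) := by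
      rw [zpow_neg, ← inv_zpow]
      norm_cast
    have : sconst (n + 1) q = sconst n q + (q⁻¹) ^ (2 * (n + 1)) := by
      rw [← hcast]
      simp [sconst, Fin.sum_univ_castSucc]
    rw [this, mul_add, ih]
    linear_combination q⁻¹ * (q⁻¹) ^ (2 * n) * (mul_inv_cancel₀ hq0)

/-- The torsion and metric-compatibility equations for a bicovariant connection on the
calculus `Γ_{+,z}` on `SL_q(N)` have a unique solution `(λ₁,…,λ₆)`, which is given
explicitly (here `l 0 = λ₁, …, l 5 = λ₆`, `Q = q − q⁻¹`, `𝔰 = Σ_{i=1}^{N} q^{−2i}`). -/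
theorem levi_civita_system_plus (N : ℕ) (hN : 2 ≤ N) (q : ℂ) (hq0 : q ≠ 0)
    (hq : ∀ n : ℕ, 0 < n → q ^ n ≠ 1) (α β : ℂ) (hα : α ≠ 0)
    (hαβ : α + sconst N q * β ≠ 0) :
    ∀ l : Fin 6 → ℂ,
      ((q - q⁻¹) * l 2 = (q - q⁻¹) * l 3 ∧
        (q - q⁻¹) * l 3 = (q - q⁻¹) + q * l 4 - ((q - q⁻¹) ^ 2 + 1) * l 5 ∧
        l 3 + (q - q⁻¹) * l 5 = 0 ∧
        l 4 + q⁻¹ * l 5 = 0 ∧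
        α * l 1 + (α + sconst N q * β) * l 2 = 0 ∧
        (α + sconst N q * β) * l 0 + β * l 1 + β * l 3 +
          q ^ (2 * N) * (q - q⁻¹) * (β + q * (q - q⁻¹) * α) * l 5 = 0) ↔
      l = ![-(q ^ (2 * N + 1) * (q - q⁻¹) ^ 3) / 2 - (q - q⁻¹) ^ 2 * β / (2 * α),
            (q - q⁻¹) ^ 2 * (α + sconst N q * β) / (2 * α),
            -((q - q⁻¹) ^ 2) / 2,
            -((q - q⁻¹) ^ 2) / 2,
            -(q - q⁻¹) / (2 * q),
            (q - q⁻¹) / 2] := by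
  have hqi : q * q⁻¹ = 1 := mul_inv_cancel₀ hq0
  have hq2 : q ^ 2 ≠ 1 := hq 2 (by norm_num)
  have hQ : q - q⁻¹ ≠ 0 := by
    intro h
    apply hq2
    have h2 : (q - q⁻¹) * q = 0 := by rw [h]; ring
    linear_combination h2 + hqi
  have hs := sconst_mul N q hq0
  have hinv2 : (q⁻¹) ^ (2 * N + 1) * q ^ (2 * N + 1) = 1 := by
    rw [← mul_pow, inv_mul_cancel₀ hq0, one_pow]
  have hs2 : sconst N q * (q - q⁻¹) * q ^ (2 * N + 1) = q ^ (2 * N) - 1 := by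
    linear_combination q ^ (2 * N + 1) * hs + q ^ (2 * N) * hqi - hinv2
  intro l
  constructor
  · rintro ⟨h1, h2, h3, h4, h5, h6⟩
    have e5 : l 5 = (q - q⁻¹) / 2 := by
      linear_combination (1/2 : ℂ) * h2 - ((q - q⁻¹)/2) * h3 + (q/2) * h4 - (l 5 / 2) * hqi
    have e4 : l 4 = -(q - q⁻¹) / (2 * q) := by
      rw [e5] at h4
      field_simp at h4 ⊢
      linear_combination h4
    have e3 : l 3 = -((q - q⁻¹) ^ 2) / 2 := by
      rw [e5] at h3; linear_combination h3
    have e2 : l 2 = -((q - q⁻¹) ^ 2) / 2 := by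
      rw [e3] at h1
      exact mul_left_cancel₀ hQ h1
    have e1 : l 1 = (q - q⁻¹) ^ 2 * (α + sconst N q * β) / (2 * α) := by
      rw [e2] at h5
      field_simp at h5 ⊢
      linear_combination h5
    have e0 : l 0 = -(q ^ (2 * N + 1) * (q - q⁻¹) ^ 3) / 2 - (q - q⁻¹) ^ 2 * β / (2 * α) := by
      rw [e1, e3, e5] at h6
      refine mul_left_cancel₀ hαβ ?_
      linear_combination h6 + (β * (q - q⁻¹) ^ 2 / 2) * hs2
    funext i
    fin_cases i
    · exact e0
    · exact e1
    · exact e2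
    · exact e3
    · exact e4
    · exact e5
  · intro h
    have e0 : l 0 = -(q ^ (2 * N + 1) * (q - q⁻¹) ^ 3) / 2 - (q - q⁻¹) ^ 2 * β / (2 * α) :=
      congrFun h 0
    have e1 : l 1 = (q - q⁻¹) ^ 2 * (α + sconst N q * β) / (2 * α) := congrFun h 1
    have e2 : l 2 = -((q - q⁻¹) ^ 2) / 2 := congrFun h 2
    have e3 : l 3 = -((q - q⁻¹) ^ 2) / 2 := congrFun h 3
    have e4 : l 4 = -(q - q⁻¹) / (2 * q) := congrFun h 4
    have e5 : l 5 = (q - q⁻¹) / 2 := congrFun h 5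
    refine ⟨by rw [e2, e3], ?_, ?_, ?_, ?_, ?_⟩
    · rw [e3, e4, e5]
      linear_combination ((q - q⁻¹) / 2) * hqi
    · rw [e3, e5]; ring
    · rw [e4, e5]; field_simp; ring
    · rw [e1, e2]; field_simp; ring
    · rw [e0, e1, e3, e5]
      linear_combination (-(β * (q - q⁻¹) ^ 2 / 2)) * hs2

end Stmt6
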